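/- Let L and L' be real normed spaces and let Q : L → L' be a continuous map. Then the following two conditions are equivalent: (a) Q satisfies Q(u+v) + Q(u-v) = 2Q(u) + 2Q(v) for all u, v ∈ L and Q(k•u) = k²•Q(u) for all u ∈ L and all k ∈ ℝ; (b) there exists a continuous symmetric bilinear map B : L × L → L' such that Q(u) = B(u,u) for all u ∈ L. -/
import Mathlib


/-- For a continuous map `Q` between real normed spaces, the
parallelogram-type identity together with real quadratic homogeneity is
equivalent to `Q` being the diagonal of a continuous symmetric bilinear map. -/
theorem quadratic_iff_diagonal_of_bilinear
    {L L' : Type*} [NormedAddCommGroup L] [NormedSpace ℝ L]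
    [NormedAddCommGroup L'] [NormedSpace ℝ L']
    (Q : L → L') (hQcont : Continuous Q) :
    ((∀ u v : L, Q (u + v) + Q (u - v) = (2 : ℝ) • Q u + (2 : ℝ) • Q v) ∧
      (∀ (k : ℝ) (u : L), Q (k • u) = k ^ 2 • Q u)) ↔
    (∃ B : L → L → L',
      Continuous (fun p : L × L => B p.1 p.2) ∧
      (∀ u v : L, B u v = B v u) ∧
      (∀ u v w : L, B (u + v) w = B u w + B v w) ∧
      (∀ (k : ℝ) (u v : L), B (k • u) v = k • B u v) ∧
      (∀ u v w : L, B u (v + w) = B u v + B u w) ∧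
      (∀ (k : ℝ) (u v : L), B u (k • v) = k • B u v) ∧
      (∀ u : L, Q u = B u u)) := by
  constructor
  · rintro ⟨hpar, hhom⟩
    set B : L → L → L' := fun u v => (4 : ℝ)⁻¹ • (Q (u + v) - Q (u - v)) with hBdef
    have hQeven : ∀ u : L, Q (-u) = Q u := by
      intro u
      have := hhom (-1) u
      simpa using this
    have hsymm : ∀ u v : L, B u v = B v u := by
      intro u v
      have h1 : Q (u - v) = Q (v - u) := by
        rw [← hQeven (v - u), neg_sub]
      simp only [hBdef, h1, add_comm u v]
    have hcont : Continuous (fun p : L × L => B p.1 p.2) := by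
      apply Continuous.const_smul
      exact (hQcont.comp (continuous_fst.add continuous_snd)).sub
        (hQcont.comp (continuous_fst.sub continuous_snd))
    have hB0 : ∀ w : L, B 0 w = 0 := by
      intro w
      have : Q (0 - w) = Q (0 + w) := by
        rw [zero_sub, zero_add, hQeven]
      simp [hBdef, this, hQeven]
    -- key parallelogram-type identity for B
    have hkey : ∀ u v w : L, B (u + v) w + B (u - v) w = (2 : ℝ) • B u w := by
      intro u v w
      have h1 : Q (u + v + w) + Q (u - v + w) = (2 : ℝ) • Q (u + w) + (2 : ℝ) • Q v := by
        have := hpar (u + w) v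
        convert this using 3 <;> abel
      have h2 : Q (u + v - w) + Q (u - v - w) = (2 : ℝ) • Q (u - w) + (2 : ℝ) • Q v := by
        have := hpar (u - w) v
        convert this using 3 <;> abel
      have : Q (u + v + w) - Q (u + v - w) + (Q (u - v + w) - Q (u - v - w))
          = (2 : ℝ) • (Q (u + w) - Q (u - w)) := by
        have e : Q (u + v + w) + Q (u - v + w) - (Q (u + v - w) + Q (u - v - w))
            = (2 : ℝ) • Q (u + w) - (2 : ℝ) • Q (u - w) := by
          rw [h1, h2]; abel
        rw [smul_sub]
        rw [← e]; abel
      simp only [hBdef]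
      rw [← smul_add, ← smul_comm, this]
    have hdouble : ∀ u w : L, B ((2 : ℝ) • u) w = (2 : ℝ) • B u w := by
      intro u w
      have := hkey u u w
      rw [sub_self, hB0, add_zero] at this
      rw [← this, two_smul]
    have haddl : ∀ u v w : L, B (u + v) w = B u w + B v w := by
      intro a b w
      have h := hkey ((2 : ℝ)⁻¹ • (a + b)) ((2 : ℝ)⁻¹ • (a - b)) w
      have e1 : (2 : ℝ)⁻¹ • (a + b) + (2 : ℝ)⁻¹ • (a - b) = a := by
        rw [← smul_add]; rw [show a + b + (a - b) = (2 : ℝ) • a by rw [two_smul]; abel]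
        rw [smul_smul]; norm_num
      have e2 : (2 : ℝ)⁻¹ • (a + b) - (2 : ℝ)⁻¹ • (a - b) = b := by
        rw [← smul_sub]; rw [show a + b - (a - b) = (2 : ℝ) • b by rw [two_smul]; abel]
        rw [smul_smul]; norm_num
      rw [e1, e2] at h
      have h2 := hdouble ((2 : ℝ)⁻¹ • (a + b)) w
      rw [smul_smul, show (2:ℝ) * 2⁻¹ = 1 by norm_num, one_smul] at h2
      rw [h, ← h2]
    -- real homogeneity in first variable via continuity
    have hsmull : ∀ (k : ℝ) (u v : L), B (k • u) v = k • B u v := by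
      intro k u v
      let f : L →+ L' :=
        { toFun := fun u => B u v
          map_zero' := hB0 v
          map_add' := fun a b => haddl a b v }
      have hfc : Continuous f := by
        exact hcont.comp (continuous_id.prodMk continuous_const)
      have hco : ∀ x, (f.toRealLinearMap hfc) x = B x v := fun x =>
        congrFun (f.coe_toRealLinearMap hfc) x
      rw [← hco, ← hco, map_smul]
    refine ⟨B, hcont, hsymm, haddl, hsmull, ?_, ?_, ?_⟩
    · intro u v w
      rw [hsymm, haddl, hsymm v u, hsymm w u]
    · intro k u v
      rw [hsymm, hsmull, hsymm v u]
    · intro u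
      simp only [hBdef]
      have h0 : Q (0 : L) = 0 := by
        have := hhom 0 0
        simpa using this
      rw [show u + u = (2 : ℝ) • u by rw [two_smul], hhom, sub_self, h0,
        sub_zero, smul_smul]
      norm_num
  · rintro ⟨B, hcont, hsymm, haddl, hsmull, haddr, hsmulr, hdiag⟩
    constructor
    · intro u v
      simp only [hdiag, haddl, haddr, sub_eq_add_neg,
        show ∀ x : L, -x = (-1 : ℝ) • x from fun x => by simp,
        hsmull, hsmulr, two_smul]
      rw [hsymm v u]
      abel_nf
      simp [smul_smul]
      abel
    · intro k u
      rw [hdiag, hdiag, hsmull, hsmulr, smul_smul, pow_two]
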